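/- The kernel of the ring homomorphism L: tCH2 -> CH2 is the Z-submodule generated by th_{-1} together with the elements th_{-i} + th_{i-2} for integers i >= 1. -/

import Mathlib

def tau (i : ℤ) : ℤ := |i + 1| - 1

/-- Basis element `th_i` of the free ℤ-module `tCH2 = ℤ →₀ ℤ`. -/
noncomputable def th (i : ℤ) : ℤ →₀ ℤ := Finsupp.single i 1

/-- Product of basis elements of `tCH2`:
`th_{-1} th_j = 0`; `th_i th_j = ∑_{k=0}^i th_{j-i+2k}` for `i ≥ 0`;
`th_i th_j = -(th_{tau i} th_j)` for `i < -1` (note `tau i ≥ 0` there). -/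
noncomputable def thMulB (i j : ℤ) : ℤ →₀ ℤ :=
  if i = -1 then 0
  else if 0 ≤ i then
    ∑ k ∈ Finset.range (i.toNat + 1), Finsupp.single (j - i + 2 * (k : ℤ)) (1 : ℤ)
  else
    -(∑ k ∈ Finset.range ((tau i).toNat + 1),
        Finsupp.single (j - tau i + 2 * (k : ℤ)) (1 : ℤ))

/-- The bilinear extension of `thMulB` to all of `tCH2`. -/
noncomputable def tmul (x y : ℤ →₀ ℤ) : ℤ →₀ ℤ :=
  x.sum fun i a => y.sum fun j b => (a * b) • thMulB i j

/-- Basis element `h_i` of the free ℤ-module `CH2 = ℕ →₀ ℤ`. -/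
noncomputable def hb (i : ℕ) : ℕ →₀ ℤ := Finsupp.single i 1

/-- Product of basis elements of `CH2`: `h_i h_j = ∑_{k=0}^{min i j} h_{|j-i|+2k}`. -/
noncomputable def hMulB (i j : ℕ) : ℕ →₀ ℤ :=
  ∑ k ∈ Finset.range (min i j + 1), Finsupp.single (max i j - min i j + 2 * k) (1 : ℤ)

/-- The bilinear extension of `hMulB` to all of `CH2`. -/
noncomputable def hmul (x y : ℕ →₀ ℤ) : ℕ →₀ ℤ :=
  x.sum fun i a => y.sum fun j b => (a * b) • hMulB i j

/-- The linear map `L : tCH2 → CH2`, `th_i ↦ sgn(i+1) • h_{tau i}`. -/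
noncomputable def Lmap (x : ℤ →₀ ℤ) : ℕ →₀ ℤ :=
  x.sum fun i a => (a * (i + 1).sign) • Finsupp.single (tau i).toNat (1 : ℤ)

lemma Lmap_add (x y : ℤ →₀ ℤ) : Lmap (x + y) = Lmap x + Lmap y := by
  unfold Lmap
  apply Finsupp.sum_add_index'
  · intro a; simp
  · intro a b₁ b₂; rw [add_mul, add_smul]

lemma Lmap_single (i : ℤ) (a : ℤ) :
    Lmap (Finsupp.single i a) = (a * (i + 1).sign) • Finsupp.single (tau i).toNat (1 : ℤ) := by
  unfold Lmap
  apply Finsupp.sum_single_index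
  simp

lemma Lmap_coeff (x : ℤ →₀ ℤ) (n : ℕ) :
    Lmap x n = x ↑n - x (-(n:ℤ) - 2) := by
  induction x using Finsupp.induction_linear with
  | zero => simp [Lmap]
  | add f g hf hg => rw [Lmap_add]; simp [hf, hg]; ring
  | single i a =>
    rw [Lmap_single]
    rcases lt_trichotomy i (-1) with h | h | h
    · have hs : (i + 1).sign = -1 := Int.sign_eq_neg_one_iff_neg.mpr (by omega)
      have ht : (tau i).toNat = (-i - 2).toNat := by
        unfold tau; congr 1; rw [abs_of_neg (by omega)]; ring
      rw [hs, ht]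
      simp only [Finsupp.smul_apply, Finsupp.single_apply, smul_eq_mul]
      split_ifs <;> first | omega | (exfalso; assumption)
    · subst h
      simp only [Finsupp.smul_apply, Finsupp.single_apply, smul_eq_mul, Int.sign_zero,
        neg_add_cancel, mul_zero, zero_mul, Finsupp.coe_zero, Pi.zero_apply, zero_smul]
      split_ifs <;> first | omega | (exfalso; assumption)
    · have hs : (i + 1).sign = 1 := Int.sign_eq_one_iff_pos.mpr (by omega)
      have ht : (tau i).toNat = i.toNat := by
        unfold tau; congr 1; rw [abs_of_nonneg (by omega)]; ring
      rw [hs, ht]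
      simp only [Finsupp.smul_apply, Finsupp.single_apply, smul_eq_mul]
      split_ifs <;> first | omega | (exfalso; assumption)

lemma Lmap_smul (c : ℤ) (x : ℤ →₀ ℤ) : Lmap (c • x) = c • Lmap x := by
  unfold Lmap
  rw [Finsupp.sum_smul_index (fun i => by simp), Finsupp.smul_sum]
  exact Finsupp.sum_congr fun i _ => by rw [mul_assoc, mul_smul]

theorem ker_Lmap_span :
    {x : ℤ →₀ ℤ | Lmap x = 0} =
      (Submodule.span ℤ
        ({th (-1)} ∪ {f | ∃ i : ℤ, 1 ≤ i ∧ f = th (-i) + th (i - 2)}) : Set (ℤ →₀ ℤ)) := by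
  apply Set.Subset.antisymm
  · -- kernel ⊆ span
    intro x hx
    have P : ∀ n : ℕ, x ↑n = x (-(n:ℤ) - 2) := by
      intro n
      have h0 : Lmap x n = 0 := by rw [hx]; rfl
      rw [Lmap_coeff] at h0
      omega
    set N : ℕ := x.support.sup Int.natAbs with hNdef
    have hout : ∀ j : ℤ, N < j.natAbs → x j = 0 := by
      intro j hj
      by_contra hne
      have : j.natAbs ≤ N := Finset.le_sup (Finsupp.mem_support_iff.mpr hne)
      omega
    have hdecomp : x = x (-1) • th (-1) +
        ∑ n ∈ Finset.range (N + 1), x ↑n • (th (-(n:ℤ) - 2) + th ↑n) := by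
      ext j
      simp only [Finsupp.add_apply, Finsupp.smul_apply, Finsupp.finset_sum_apply, th,
        Finsupp.single_apply, smul_eq_mul]
      rcases lt_trichotomy j (-1) with h | h | h
      · -- j ≤ -2
        have step : ∀ n ∈ Finset.range (N + 1),
            x ↑n * ((if -(n:ℤ) - 2 = j then 1 else 0) + (if (n:ℤ) = j then 1 else 0)) =
            if n = (-j - 2).toNat then x ↑((-j-2).toNat) else 0 := by
          intro n _
          have h2 : ¬ ((n:ℤ) = j) := by omega
          rw [if_neg h2, add_zero]
          by_cases hm : n = (-j - 2).toNat
          · rw [if_pos (by omega), if_pos hm, hm, mul_one]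
          · rw [if_neg (by omega), if_neg hm, mul_zero]
        rw [Finset.sum_congr rfl step, Finset.sum_ite_eq' (Finset.range (N + 1))]
        rw [if_neg (by omega)]
        by_cases hm : (-j - 2).toNat ∈ Finset.range (N + 1)
        · rw [if_pos hm, P]
          have : (-((-j - 2).toNat : ℤ) - 2) = j := by omega
          rw [this]; ring
        · rw [if_neg hm]
          simp only [Finset.mem_range] at hm
          rw [hout j (by omega)]; ring
      · -- j = -1
        subst h
        rw [if_pos rfl, mul_one, Finset.sum_eq_zero, add_zero]
        intro n _
        rw [if_neg (by omega), if_neg (by omega), add_zero, mul_zero]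
      · -- j ≥ 0
        have step : ∀ n ∈ Finset.range (N + 1),
            x ↑n * ((if -(n:ℤ) - 2 = j then 1 else 0) + (if (n:ℤ) = j then 1 else 0)) =
            if n = j.toNat then x ↑(j.toNat) else 0 := by
          intro n _
          have h1 : ¬ (-(n:ℤ) - 2 = j) := by omega
          rw [if_neg h1, zero_add]
          by_cases hm : n = j.toNat
          · rw [if_pos (by omega), if_pos hm, hm, mul_one]
          · rw [if_neg (by omega), if_neg hm, mul_zero]
        rw [Finset.sum_congr rfl step, Finset.sum_ite_eq' (Finset.range (N + 1))]
        rw [if_neg (by omega)]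
        by_cases hm : j.toNat ∈ Finset.range (N + 1)
        · rw [if_pos hm]
          have : ((j.toNat : ℤ)) = j := by omega
          rw [this]; ring
        · rw [if_neg hm]
          simp only [Finset.mem_range] at hm
          rw [hout j (by omega)]; ring
    rw [hdecomp]
    apply Submodule.add_mem
    · exact Submodule.smul_mem _ _ (Submodule.subset_span (Or.inl rfl))
    · apply Submodule.sum_mem
      intro n _
      apply Submodule.smul_mem
      apply Submodule.subset_span
      refine Or.inr ⟨(n : ℤ) + 2, by omega, ?_⟩
      have e1 : -((n:ℤ) + 2) = -(n:ℤ) - 2 := by ring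
      have e2 : ((n:ℤ) + 2) - 2 = (n:ℤ) := by ring
      rw [e1, e2]
  · -- span ⊆ kernel
    intro x hx
    simp only [Set.mem_setOf_eq]
    induction hx using Submodule.span_induction with
    | mem y hy =>
      rcases hy with hy | ⟨i, hi, rfl⟩
      · rw [Set.mem_singleton_iff] at hy
        subst hy
        rw [th, Lmap_single]
        simp
      · ext n
        rw [Lmap_coeff]
        simp only [Finsupp.add_apply, th, Finsupp.single_apply, Finsupp.coe_zero, Pi.zero_apply]
        split_ifs <;> first | omega | (exfalso; omega)
    | zero => simp [Lmap]
    | add a b _ _ ha hb => rw [Lmap_add, ha, hb, add_zero]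
    | smul c a _ ha => rw [Lmap_smul, ha, smul_zero]
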